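/- Let u, s ∈ ℂ with (u+1)² ≠ s². Define the 4×4 matrix M(x) = α(x)·E₁₂ + β(x)·E₁₃ + β(x)·E₂₄ − α(x)·E₃₄ with α(x) = 4s² + 4x − 3 and β(x) = (2x − 1)². Then for k ∈ ℂ the matrix K = I₄ + k·(−E₂₂ + E₂₃ + E₃₂ − E₃₃ − 2·E₄₄) satisfies M(−u)·K = K·M(u) if and only if k = 2u/((u+1)² − s²). -/
import Mathlib


open Matrix

/-- The represented coproduct of the level-two twisted Yangian generator of
`Y(gl(1|1), gl(1|1))` at `t = 0`:
`M(x) = α(x)·E₁₂ + β(x)·E₁₃ + β(x)·E₂₄ − α(x)·E₃₄`. -/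
noncomputable def Mtgy (s x : ℂ) : Matrix (Fin 4) (Fin 4) ℂ :=
  !![0, 4 * s ^ 2 + 4 * x - 3, (2 * x - 1) ^ 2, 0;
     0, 0, 0, (2 * x - 1) ^ 2;
     0, 0, 0, -(4 * s ^ 2 + 4 * x - 3);
     0, 0, 0, 0]

/-- The K-matrix `I₄ + k·(−E₂₂ + E₂₃ + E₃₂ − E₃₃ − 2E₄₄)` intertwines the
level-two twisted Yangian generator iff `k = 2u/((u+1)² − s²)`. -/
theorem stmt19 (u s k : ℂ) (hs : (u + 1) ^ 2 ≠ s ^ 2) :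
    Mtgy s (-u) *
        (1 + k • !![0, 0, 0, 0; 0, -1, 1, 0; 0, 1, -1, 0; 0, 0, 0, -2]) =
      (1 + k • !![0, 0, 0, 0; 0, -1, 1, 0; 0, 1, -1, 0; 0, 0, 0, -2]) *
        Mtgy s u ↔
      k = 2 * u / ((u + 1) ^ 2 - s ^ 2) := by
  have hd : (u + 1) ^ 2 - s ^ 2 ≠ 0 := sub_ne_zero.mpr hs
  have hK : (1 + k • !![0, 0, 0, 0; 0, -1, 1, 0; 0, 1, -1, 0; 0, 0, 0, -2] :
      Matrix (Fin 4) (Fin 4) ℂ) =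
      !![1, 0, 0, 0; 0, 1 - k, k, 0; 0, k, 1 - k, 0; 0, 0, 0, 1 - 2 * k] := by
    ext i j
    fin_cases i <;> fin_cases j <;>
      simp [Matrix.one_apply, Matrix.vecHead, Matrix.vecTail] <;> ring
  rw [hK]
  constructor
  · intro h
    have h12 := congrFun (congrFun h 0) 1
    simp [Mtgy, Matrix.mul_apply, Fin.sum_univ_four] at h12
    rw [eq_div_iff hd]
    linear_combination (norm := (norm_num1; ring1)) (1 / 4 : ℂ) * h12
  · intro h
    have hk : k * ((u + 1) ^ 2 - s ^ 2) = 2 * u := by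
      rw [h]; field_simp
    ext i j
    fin_cases i <;> fin_cases j <;>
      simp [Mtgy, Matrix.mul_apply, Fin.sum_univ_four, Matrix.vecHead,
        Matrix.vecTail] <;>
      first
        | linear_combination (norm := (norm_num1; ring1)) (4 : ℂ) * hk
        | linear_combination (norm := (norm_num1; ring1)) (-4 : ℂ) * hk
        | linear_combination (norm := (norm_num1; ring1)) (2 : ℂ) * hk
        | linear_combination (norm := (norm_num1; ring1)) (-2 : ℂ) * hk
        | linear_combination (norm := (norm_num1; ring1)) (6 : ℂ) * hk
        | linear_combination (norm := (norm_num1; ring1)) (-6 : ℂ) * hk
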